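/- There exist a set S of integers and a bijection f : ℕ → S such that f avoids 3-term arithmetic progressions, the upper density of S is at least 1/2, and the lower density of S is at least 1/6. (Hence α_ℤ(3) ≥ 1/2 and β_ℤ(3) ≥ 1/6.) -/

import Mathlib

open List

def apList : ℕ → List ℕ
  | 0 => []
  | 1 => [0]
  | (n+2) => ((apList ((n+3)/2)).map (2 * ·)) ++ ((apList ((n+2)/2)).map (2 * · + 1))
decreasing_by all_goals omega

theorem apList_length (L : ℕ) : (apList L).length = L := by
  induction L using Nat.strong_induction_on with
  | _ L ih =>
    match L with
    | 0 => simp [apList]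
    | 1 => simp [apList]
    | (n+2) =>
      rw [apList]
      simp only [List.length_append, List.length_map, ih ((n+3)/2) (by omega),
        ih ((n+2)/2) (by omega)]
      omega

theorem apList_mem_lt (L : ℕ) : ∀ x ∈ apList L, x < L := by
  induction L using Nat.strong_induction_on with
  | _ L ih =>
    match L with
    | 0 => simp [apList]
    | 1 => simp [apList]
    | (n+2) =>
      intro x hx
      rw [apList] at hx
      rcases List.mem_append.1 hx with h | h <;>
        obtain ⟨a, ha, rfl⟩ := List.mem_map.1 h
      · have := ih ((n+3)/2) (by omega) a ha; beta_reduce; omega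
      · have := ih ((n+2)/2) (by omega) a ha; beta_reduce; omega

theorem apList_nodup (L : ℕ) : (apList L).Nodup := by
  induction L using Nat.strong_induction_on with
  | _ L ih =>
    match L with
    | 0 => simp [apList]
    | 1 => simp [apList]
    | (n+2) =>
      rw [apList]
      refine List.Nodup.append ?_ ?_ ?_
      · exact (ih ((n+3)/2) (by omega)).map (by intro a b h; beta_reduce at h; omega)
      · exact (ih ((n+2)/2) (by omega)).map (by intro a b h; beta_reduce at h; omega)
      · intro x hx hy
        obtain ⟨a, _, rfl⟩ := List.mem_map.1 hx
        obtain ⟨b, _, hb⟩ := List.mem_map.1 hy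
        beta_reduce at hb
        omega

theorem apList_mem (L : ℕ) : ∀ i < L, i ∈ apList L := by
  induction L using Nat.strong_induction_on with
  | _ L ih =>
    match L with
    | 0 => omega
    | 1 => intro i hi; interval_cases i; simp [apList]
    | (n+2) =>
      intro i hi
      rw [apList, List.mem_append]
      rcases Nat.even_or_odd i with ⟨a, rfl⟩ | ⟨a, rfl⟩
      · exact Or.inl (List.mem_map.2 ⟨a, ih ((n+3)/2) (by omega) a (by omega),
          show 2 * a = a + a by omega⟩)
      · exact Or.inr (List.mem_map.2 ⟨a, ih ((n+2)/2) (by omega) a (by omega),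
          show 2 * a + 1 = 2 * a + 1 from rfl⟩)

theorem apList_ap_free (L : ℕ) : ∀ i j k (h1 : i < j) (h2 : j < k)
    (hk : k < (apList L).length),
    (apList L)[i]'(by omega) + (apList L)[k]'hk ≠ 2 * (apList L)[j]'(by omega) := by
  induction L using Nat.strong_induction_on with
  | _ L ih =>
    match L with
    | 0 => intro i j k h1 h2 hk; simp [apList] at hk
    | 1 => intro i j k h1 h2 hk; simp [apList] at hk; omega
    | (n+2) =>
      intro i j k h1 h2 hk
      have hE : apList (n+2) =
          ((apList ((n+3)/2)).map (2 * ·)) ++ ((apList ((n+2)/2)).map (2 * · + 1)) := by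
        rw [apList]
      have hk2 := hk
      simp only [hE, List.length_append, List.length_map, apList_length] at hk2
      simp only [hE]
      have lA : (((apList ((n+3)/2)).map (2 * ·))).length = (n+3)/2 := by
        simp [apList_length]
      by_cases hkA : k < (n+3)/2
      · rw [List.getElem_append_left (by omega), List.getElem_append_left (by omega),
          List.getElem_append_left (by omega)]
        simp only [List.getElem_map]
        have := ih ((n+3)/2) (by omega) i j k h1 h2 (by rw [apList_length]; omega)
        beta_reduce
        omega
      · by_cases hiA : i < (n+3)/2
        · rw [List.getElem_append_left (by omega),
            List.getElem_append_right (by omega)]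
          simp only [List.getElem_map]
          by_cases hjA : j < (n+3)/2
          · rw [List.getElem_append_left (by omega)]
            simp only [List.getElem_map]; beta_reduce; omega
          · rw [List.getElem_append_right (by omega)]
            simp only [List.getElem_map]; beta_reduce; omega
        · rw [List.getElem_append_right (by omega), List.getElem_append_right (by omega),
            List.getElem_append_right (by omega)]
          simp only [List.getElem_map]
          have := ih ((n+2)/2) (by omega) (i - (n+3)/2) (j - (n+3)/2) (k - (n+3)/2)
            (by omega) (by omega) (by rw [apList_length]; omega)
          simp only [lA]
          beta_reduce at this ⊢
          omega

def lvl (n : ℕ) : ℕ := Nat.log 5 (n+1)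

def off (n : ℕ) : ℕ :=
  if n + 1 < 3 * 5 ^ lvl n then n + 1 - 5 ^ lvl n else n + 1 - 3 * 5 ^ lvl n

noncomputable def vl (n : ℕ) : ℕ := (apList (2 * 5 ^ lvl n)).getD (off n) 0

noncomputable def mg (n : ℕ) : ℕ := 3 * 5 ^ lvl n + 1 + vl n

noncomputable def ff (n : ℕ) : ℤ :=
  if n + 1 < 3 * 5 ^ lvl n then (mg n : ℤ) else -(mg n : ℤ)

theorem lvl_le (n : ℕ) : 5 ^ lvl n ≤ n + 1 :=
  Nat.pow_log_le_self 5 (by omega)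

theorem lvl_lt (n : ℕ) : n + 1 < 5 ^ (lvl n + 1) :=
  Nat.lt_pow_succ_log_self (by norm_num) _

theorem lvl_mono {a b : ℕ} (h : a ≤ b) : lvl a ≤ lvl b :=
  Nat.log_mono_right (by omega)

theorem off_lt (n : ℕ) : off n < 2 * 5 ^ lvl n := by
  have h1 := lvl_le n
  have h2 := lvl_lt n
  rw [pow_succ] at h2
  unfold off
  split <;> omega

theorem vl_eq (n : ℕ) :
    vl n = (apList (2 * 5 ^ lvl n))[off n]'(by rw [apList_length]; exact off_lt n) := by
  unfold vl
  rw [List.getD_eq_getElem]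

theorem vl_lt (n : ℕ) : vl n < 2 * 5 ^ lvl n := by
  rw [vl_eq]
  exact apList_mem_lt _ _ (List.getElem_mem _)

theorem mg_lb (n : ℕ) : 3 * 5 ^ lvl n + 1 ≤ mg n := by unfold mg; omega

theorem mg_ub (n : ℕ) : mg n ≤ 5 ^ (lvl n + 1) := by
  have := vl_lt n; unfold mg; rw [pow_succ]; omega

-- level determination for explicitly positioned n
theorem lvl_of_pos (k p : ℕ) (hp : p < 2 * 5 ^ k) : lvl (5 ^ k - 1 + p) = k := by
  have h5 : 1 ≤ 5 ^ k := Nat.one_le_pow _ _ (by norm_num)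
  unfold lvl
  refine Nat.log_eq_of_pow_le_of_lt_pow (by omega) ?_
  rw [pow_succ]; omega

theorem lvl_of_neg (k p : ℕ) (hp : p < 2 * 5 ^ k) : lvl (3 * 5 ^ k - 1 + p) = k := by
  have h5 : 1 ≤ 5 ^ k := Nat.one_le_pow _ _ (by norm_num)
  unfold lvl
  refine Nat.log_eq_of_pow_le_of_lt_pow (by omega) ?_
  rw [pow_succ]; omega

theorem ff_surj_pos (k w : ℕ) (hw : w < 2 * 5 ^ k) :
    ∃ n, ff n = ((3 * 5 ^ k + 1 + w : ℕ) : ℤ) := by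
  obtain ⟨p, hp, hpe⟩ := List.mem_iff_getElem.1 (apList_mem (2 * 5 ^ k) w hw)
  rw [apList_length] at hp
  have h5 : 1 ≤ 5 ^ k := Nat.one_le_pow _ _ (by norm_num)
  refine ⟨5 ^ k - 1 + p, ?_⟩
  have hl : lvl (5 ^ k - 1 + p) = k := lvl_of_pos k p hp
  have hside : 5 ^ k - 1 + p + 1 < 3 * 5 ^ lvl (5 ^ k - 1 + p) := by rw [hl]; omega
  have hoff : off (5 ^ k - 1 + p) = p := by unfold off; rw [if_pos hside, hl]; omega
  have hvl : vl (5 ^ k - 1 + p) = w := by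
    rw [vl_eq]
    simp only [hoff, hl]
    exact hpe
  unfold ff mg
  rw [if_pos hside, hl, hvl]

theorem ff_surj_neg (k w : ℕ) (hw : w < 2 * 5 ^ k) :
    ∃ n, ff n = -((3 * 5 ^ k + 1 + w : ℕ) : ℤ) := by
  obtain ⟨p, hp, hpe⟩ := List.mem_iff_getElem.1 (apList_mem (2 * 5 ^ k) w hw)
  rw [apList_length] at hp
  have h5 : 1 ≤ 5 ^ k := Nat.one_le_pow _ _ (by norm_num)
  refine ⟨3 * 5 ^ k - 1 + p, ?_⟩
  have hl : lvl (3 * 5 ^ k - 1 + p) = k := lvl_of_neg k p hp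
  have hside : ¬ (3 * 5 ^ k - 1 + p + 1 < 3 * 5 ^ lvl (3 * 5 ^ k - 1 + p)) := by
    rw [hl]; omega
  have hoff : off (3 * 5 ^ k - 1 + p) = p := by unfold off; rw [if_neg hside, hl]; omega
  have hvl : vl (3 * 5 ^ k - 1 + p) = w := by
    rw [vl_eq]
    simp only [hoff, hl]
    exact hpe
  unfold ff mg
  rw [if_neg hside, hl, hvl]

theorem mg_disj {a b : ℕ} (h : lvl a < lvl b) : mg a < mg b := by
  have h1 := mg_ub a
  have h2 := mg_lb b
  have h3 : 5 ^ (lvl a + 1) ≤ 5 ^ lvl b := Nat.pow_le_pow_right (by norm_num) h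
  omega

theorem ff_inj : Function.Injective ff := by
  have key : ∀ a b : ℕ, a < b → ff a = ff b → False := by
    intro a b hab he
    have hla : 1 ≤ mg a := by have := mg_lb a; omega
    have hlb : 1 ≤ mg b := by have := mg_lb b; omega
    unfold ff at he
    have hmg : mg a = mg b ∧
        ((a + 1 < 3 * 5 ^ lvl a) ↔ (b + 1 < 3 * 5 ^ lvl b)) := by
      split at he <;> split at he <;> constructor <;> omega
    obtain ⟨hmge, hside⟩ := hmg
    have hlv : lvl a = lvl b := by
      rcases lt_trichotomy (lvl a) (lvl b) with h | h | h
      · exact absurd hmge (mg_disj h).ne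
      · exact h
      · exact absurd hmge.symm (mg_disj h).ne
    have hvl : vl a = vl b := by
      have hmge' := hmge
      unfold mg at hmge'
      rw [hlv] at hmge'
      omega
    have hoff : off a = off b := by
      have hna := apList_nodup (2 * 5 ^ lvl a)
      have hb := vl_eq b
      have hL : apList (2 * 5 ^ lvl b) = apList (2 * 5 ^ lvl a) := by rw [hlv]
      simp only [hL] at hb
      refine (hna.getElem_inj_iff
        (hi := by rw [apList_length]; exact off_lt a)
        (hj := by rw [apList_length, hlv]; exact off_lt b)).1 ?_
      rw [← vl_eq a, ← hb]
      exact hvl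
    have h1 := lvl_le a; have h2 := lvl_lt a
    have h3 := lvl_le b; have h4 := lvl_lt b
    have hpw : (5:ℕ) ^ lvl a = 5 ^ lvl b := by rw [hlv]
    rw [pow_succ] at h2 h4
    unfold off at hoff
    split at hoff <;> split at hoff <;> omega
  intro a b he
  by_contra hne
  rcases Nat.lt_or_ge a b with h | h
  · exact key a b h he
  · exact key b a (by omega) he.symm

theorem off_mono {a b : ℕ} (hab : a < b) (hl : lvl a = lvl b)
    (hs : (a + 1 < 3 * 5 ^ lvl a) ↔ (b + 1 < 3 * 5 ^ lvl b)) : off a < off b := by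
  have h1 := lvl_le a
  have h2 := lvl_lt a
  have h3 := lvl_le b
  have hpw : (5:ℕ) ^ lvl a = 5 ^ lvl b := by rw [hl]
  rw [pow_succ] at h2
  unfold off
  split <;> split <;> omega

theorem vl_ap {a b c : ℕ} (hl1 : lvl a = lvl c) (hl2 : lvl b = lvl c)
    (h1 : off a < off b) (h2 : off b < off c) : vl a + vl c ≠ 2 * vl b := by
  have hfree := apList_ap_free (2 * 5 ^ lvl c) (off a) (off b) (off c) h1 h2
    (by rw [apList_length]; exact off_lt c)
  have ea := vl_eq a
  have eb := vl_eq b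
  have ec := vl_eq c
  have hLa : apList (2 * 5 ^ lvl a) = apList (2 * 5 ^ lvl c) := by rw [hl1]
  have hLb : apList (2 * 5 ^ lvl b) = apList (2 * 5 ^ lvl c) := by rw [hl2]
  simp only [hLa] at ea
  simp only [hLb] at eb
  rw [ea, eb, ec]
  exact hfree

theorem ff_cases (n : ℕ) :
    (n + 1 < 3 * 5 ^ lvl n ∧ ff n = ((mg n : ℕ) : ℤ)) ∨
    (3 * 5 ^ lvl n ≤ n + 1 ∧ ff n = -((mg n : ℕ) : ℤ)) := by
  unfold ff
  split
  · exact Or.inl ⟨‹_›, rfl⟩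
  · exact Or.inr ⟨by omega, rfl⟩

theorem mg_eq (n : ℕ) : mg n = 3 * 5 ^ lvl n + 1 + vl n := rfl

theorem ff_ap_free : ¬ ∃ (i₁ i₂ i₃ : ℕ) (d : ℤ), i₁ < i₂ ∧ i₂ < i₃ ∧ d ≠ 0 ∧
    ff i₂ = ff i₁ + d ∧ ff i₃ = ff i₂ + d := by
  rintro ⟨a, b, c, d, hab, hbc, hd, h1, h2⟩
  have heq : ff a + ff c = 2 * ff b := by omega
  have hka : lvl a ≤ lvl b := lvl_mono (by omega)
  have hkb : lvl b ≤ lvl c := lvl_mono (by omega)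
  have mua := mg_ub a; have mub := mg_ub b; have muc := mg_ub c
  have mla := mg_lb a; have mlb := mg_lb b; have mlc := mg_lb c
  rcases Nat.lt_or_ge (lvl b) (lvl c) with hlt | hge
  · -- levels of b and c differ : |ff a|, |ff b| ≤ 5^(lvl c) but |ff c| ≥ 3·5^(lvl c)+1
    have ea : (5:ℕ) ^ (lvl a + 1) ≤ 5 ^ lvl c :=
      Nat.pow_le_pow_right (by norm_num) (by omega)
    have eb : (5:ℕ) ^ (lvl b + 1) ≤ 5 ^ lvl c :=
      Nat.pow_le_pow_right (by norm_num) (by omega)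
    rcases ff_cases a with ⟨_, fa⟩ | ⟨_, fa⟩ <;>
      rcases ff_cases b with ⟨_, fb⟩ | ⟨_, fb⟩ <;>
        rcases ff_cases c with ⟨_, fc⟩ | ⟨_, fc⟩ <;>
          rw [fa, fb, fc] at heq <;> omega
  · have hkbc : lvl b = lvl c := by omega
    have hpbc : (5:ℕ) ^ lvl b = 5 ^ lvl c := by rw [hkbc]
    rcases ff_cases b with ⟨sb, fb⟩ | ⟨sb, fb⟩ <;>
      rcases ff_cases c with ⟨sc, fc⟩ | ⟨sc, fc⟩
    · -- b, c both positive side, so they lie in block P(lvl c)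
      rcases Nat.lt_or_ge (lvl a) (lvl c) with halt | hage
      · -- a lower level : |ff a| ≤ 5^(lvl c)
        have ea : (5:ℕ) ^ (lvl a + 1) ≤ 5 ^ lvl c :=
          Nat.pow_le_pow_right (by norm_num) (by omega)
        rcases ff_cases a with ⟨_, fa⟩ | ⟨_, fa⟩ <;>
          rw [fa, fb, fc] at heq <;> omega
      · have hkac : lvl a = lvl c := by omega
        have hpac : (5:ℕ) ^ lvl a = 5 ^ lvl c := by rw [hkac]
        have sa : a + 1 < 3 * 5 ^ lvl a := by omega
        rcases ff_cases a with ⟨_, fa⟩ | ⟨sa', _⟩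
        · -- all three in the same block
          rw [fa, fb, fc] at heq
          have hvl : vl a + vl c = 2 * vl b := by
            rw [mg_eq, mg_eq, mg_eq] at heq
            omega
          exact vl_ap hkac hkbc
            (off_mono hab (by omega) (by omega))
            (off_mono hbc (by omega) (by omega)) hvl
        · omega
    · -- b positive, c negative : impossible numerically
      rcases ff_cases a with ⟨_, fa⟩ | ⟨_, fa⟩ <;> rw [fa, fb, fc] at heq <;>
        [skip; skip] <;>
        have ea : (5:ℕ) ^ (lvl a + 1) ≤ 5 ^ (lvl c + 1) :=
          Nat.pow_le_pow_right (by norm_num) (by omega) <;>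
        omega
    · -- b negative side, c positive side : contradicts ordering within level
      have : 3 * 5 ^ lvl b ≤ b + 1 := sb
      omega
    · -- b, c both negative side, block N(lvl c)
      rcases Nat.lt_or_ge (lvl a) (lvl c) with halt | hage
      · have ea : (5:ℕ) ^ (lvl a + 1) ≤ 5 ^ lvl c :=
          Nat.pow_le_pow_right (by norm_num) (by omega)
        rcases ff_cases a with ⟨_, fa⟩ | ⟨_, fa⟩ <;>
          rw [fa, fb, fc] at heq <;> omega
      · have hkac : lvl a = lvl c := by omega
        have hpac : (5:ℕ) ^ lvl a = 5 ^ lvl c := by rw [hkac]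
        rcases ff_cases a with ⟨sa', fa⟩ | ⟨sa, fa⟩
        · -- a positive side, b c negative : numeric contradiction
          rw [fa, fb, fc] at heq
          omega
        · -- all three in same negative block
          rw [fa, fb, fc] at heq
          have hvl : vl a + vl c = 2 * vl b := by
            rw [mg_eq, mg_eq, mg_eq] at heq
            omega
          exact vl_ap hkac hkbc
            (off_mono hab (by omega) (by omega))
            (off_mono hbc (by omega) (by omega)) hvl

theorem mem_range_pos {k : ℕ} {w : ℤ} (h1 : 3 * 5 ^ k + 1 ≤ w) (h2 : w ≤ 5 ^ (k + 1)) :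
    w ∈ Set.range ff := by
  have hk : ((5:ℤ) ^ k) = ((5 ^ k : ℕ) : ℤ) := by push_cast; ring
  have hk1 : ((5:ℤ) ^ (k+1)) = 5 * 5 ^ k := by ring
  obtain ⟨n, hn⟩ := ff_surj_pos k (w - (3 * 5 ^ k + 1)).toNat (by omega)
  refine ⟨n, ?_⟩
  rw [hn]
  push_cast
  omega

theorem mem_range_neg {k : ℕ} {w : ℤ} (h1 : 3 * 5 ^ k + 1 ≤ w) (h2 : w ≤ 5 ^ (k + 1)) :
    -w ∈ Set.range ff := by
  have hk : ((5:ℤ) ^ k) = ((5 ^ k : ℕ) : ℤ) := by push_cast; ring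
  have hk1 : ((5:ℤ) ^ (k+1)) = 5 * 5 ^ k := by ring
  obtain ⟨n, hn⟩ := ff_surj_neg k (w - (3 * 5 ^ k + 1)).toNat (by omega)
  refine ⟨n, ?_⟩
  rw [hn]
  push_cast
  omega

noncomputable def Fb (j : ℕ) : Finset ℤ :=
  Finset.Icc (3 * 5 ^ j + 1 : ℤ) (5 ^ (j + 1)) ∪
    Finset.Icc (-(5 ^ (j + 1)) : ℤ) (-(3 * 5 ^ j + 1))

theorem int_pow_cast (j : ℕ) : ((5:ℤ) ^ j) = ((5 ^ j : ℕ) : ℤ) := by push_cast; ring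

theorem Fb_card (j : ℕ) : (Fb j).card = 4 * 5 ^ j := by
  have h1 := int_pow_cast j
  have h2 := int_pow_cast (j + 1)
  have h3 : (5:ℕ) ^ (j + 1) = 5 * 5 ^ j := by ring
  unfold Fb
  rw [Finset.card_union_of_disjoint, Int.card_Icc, Int.card_Icc]
  · omega
  · rw [Finset.disjoint_left]
    intro w hw hw'
    simp only [Finset.mem_Icc] at hw hw'
    have : (0:ℤ) < 5 ^ j := by positivity
    omega

theorem Fb_abs {j : ℕ} {w : ℤ} (hw : w ∈ Fb j) :
    (3 * 5 ^ j + 1 ≤ w ∧ w ≤ 5 ^ (j + 1)) ∨ (3 * 5 ^ j + 1 ≤ -w ∧ -w ≤ 5 ^ (j + 1)) := by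
  unfold Fb at hw
  rcases Finset.mem_union.1 hw with h | h <;> simp only [Finset.mem_Icc] at h
  · exact Or.inl h
  · exact Or.inr ⟨by omega, by omega⟩

theorem Fb_subset (j : ℕ) : (Fb j : Set ℤ) ⊆ Set.range ff := by
  intro w hw
  rcases Fb_abs (Finset.mem_coe.1 hw) with ⟨h1, h2⟩ | ⟨h1, h2⟩
  · exact mem_range_pos h1 h2
  · have := mem_range_neg h1 h2
    simpa using this

theorem Fb_disj {i j : ℕ} (h : i ≠ j) : Disjoint (Fb i) (Fb j) := by
  have key : ∀ i j : ℕ, i < j → Disjoint (Fb i) (Fb j) := by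
    intro i j hij
    rw [Finset.disjoint_left]
    intro w hwi hwj
    have hp : (5:ℤ) ^ (i + 1) ≤ 5 ^ j := pow_le_pow_right₀ (by norm_num) (by omega)
    have h1 : (0:ℤ) < 5 ^ j := by positivity
    rcases Fb_abs hwi with ⟨a1, a2⟩ | ⟨a1, a2⟩ <;> rcases Fb_abs hwj with ⟨b1, b2⟩ | ⟨b1, b2⟩ <;>
      omega
  rcases Nat.lt_or_ge i j with h' | h'
  · exact key i j h'
  · exact (key j i (by omega)).symm

noncomputable def Gb (K : ℕ) : Finset ℤ := (Finset.range K).biUnion Fb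

theorem Gb_card (K : ℕ) : (Gb K).card = 5 ^ K - 1 := by
  unfold Gb
  rw [Finset.card_biUnion (fun i _ j _ hij => Fb_disj hij)]
  induction K with
  | zero => simp
  | succ K ih =>
    rw [Finset.sum_range_succ, ih, Fb_card]
    have : (5:ℕ) ^ K ≥ 1 := Nat.one_le_pow _ _ (by norm_num)
    rw [pow_succ]
    omega

theorem Gb_subset (K : ℕ) : (Gb K : Set ℤ) ⊆ Set.range ff := by
  intro w hw
  simp only [Gb, Finset.coe_biUnion, Set.mem_iUnion, Finset.mem_coe] at hw
  obtain ⟨j, _, hj⟩ := hw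
  exact Fb_subset j hj

theorem Gb_abs {K : ℕ} {w : ℤ} (hw : w ∈ Gb K) : -(5 ^ K) ≤ w ∧ w ≤ 5 ^ K := by
  simp only [Gb, Finset.mem_biUnion, Finset.mem_range] at hw
  obtain ⟨j, hj, hjw⟩ := hw
  have hp : (5:ℤ) ^ (j + 1) ≤ 5 ^ K := pow_le_pow_right₀ (by norm_num) (by omega)
  have h1 : (0:ℤ) < 5 ^ j := by positivity
  rcases Fb_abs hjw with ⟨a1, a2⟩ | ⟨a1, a2⟩ <;> constructor <;> omega

theorem cnt_lower (n : ℕ) (T : Finset ℤ)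
    (hT : (T : Set ℤ) ⊆ Set.range ff ∩ Set.Icc (-(n:ℤ)) (n:ℤ)) :
    T.card ≤ (Set.range ff ∩ Set.Icc (-(n:ℤ)) (n:ℤ)).ncard := by
  rw [← Set.ncard_coe_finset]
  exact Set.ncard_le_ncard hT ((Set.finite_Icc _ _).subset Set.inter_subset_right)

theorem cnt_A (K : ℕ) :
    5 ^ K - 1 ≤ (Set.range ff ∩ Set.Icc (-((5 ^ K : ℕ) : ℤ)) ((5 ^ K : ℕ) : ℤ)).ncard := by
  have hc : (((5 ^ K : ℕ)) : ℤ) = (5:ℤ) ^ K := by push_cast; ring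
  have := cnt_lower (5 ^ K) (Gb K) ?_
  · rw [Gb_card] at this; exact this
  · intro w hw
    have h := Gb_abs (Finset.mem_coe.1 hw)
    exact ⟨Gb_subset K hw, by rw [Set.mem_Icc, hc]; exact h⟩

theorem cnt_B (n : ℕ) : n ≤ 3 * (Set.range ff ∩ Set.Icc (-(n:ℤ)) (n:ℤ)).ncard + 5 := by
  rcases Nat.eq_zero_or_pos n with rfl | hn
  · omega
  set K := Nat.log 5 n with hK
  have h5 : (5:ℕ) ^ K ≤ n := Nat.pow_log_le_self 5 (by omega)
  have h5' : n < 5 ^ (K + 1) := Nat.lt_pow_succ_log_self (by norm_num) n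
  have hs : (5:ℕ) ^ (K+1) = 5 * 5 ^ K := by ring
  have hc : (((5 ^ K : ℕ)) : ℤ) = (5:ℤ) ^ K := by push_cast; ring
  have hposK : (1:ℕ) ≤ 5 ^ K := Nat.one_le_pow _ _ (by norm_num)
  rcases Nat.lt_or_ge n (3 * 5 ^ K + 1) with hcase | hcase
  · -- n ≤ 3·5^K : use Gb K
    have := cnt_lower n (Gb K) ?_
    · rw [Gb_card] at this; omega
    · intro w hw
      have h := Gb_abs (Finset.mem_coe.1 hw)
      refine ⟨Gb_subset K hw, ?_⟩
      rw [Set.mem_Icc]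
      have : ((5 ^ K : ℕ) : ℤ) ≤ (n : ℤ) := by exact_mod_cast h5
      rw [hc] at this
      omega
  · -- n ≥ 3·5^K + 1 : add the partial blocks
    set T : Finset ℤ := Gb K ∪ (Finset.Icc (3 * 5 ^ K + 1 : ℤ) (n : ℤ) ∪
      Finset.Icc (-(n : ℤ)) (-(3 * 5 ^ K + 1))) with hT
    have hnc : (3 * 5 ^ K + 1 : ℤ) ≤ (n : ℤ) := by exact_mod_cast hcase
    have hn5 : (n : ℤ) ≤ 5 ^ (K + 1) := by
      have : (n : ℤ) < ((5 ^ (K+1) : ℕ) : ℤ) := by exact_mod_cast h5'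
      push_cast at this
      omega
    have hcard : T.card = (5 ^ K - 1) + 2 * (n - 3 * 5 ^ K) := by
      rw [hT, Finset.card_union_of_disjoint, Finset.card_union_of_disjoint,
        Int.card_Icc, Int.card_Icc, Gb_card]
      · omega
      · rw [Finset.disjoint_left]
        intro w hw hw'
        simp only [Finset.mem_Icc] at hw hw'
        have : (0:ℤ) < 5 ^ K := by positivity
        omega
      · rw [Finset.disjoint_left]
        intro w hw hw'
        have h := Gb_abs hw
        rcases Finset.mem_union.1 hw' with h' | h' <;> simp only [Finset.mem_Icc] at h' <;>
          omega
    have := cnt_lower n T ?_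
    · rw [hcard] at this; omega
    · intro w hw
      rcases Finset.mem_union.1 (Finset.mem_coe.1 hw) with hw1 | hw2
      · have h := Gb_abs hw1
        refine ⟨Gb_subset K (Finset.mem_coe.2 hw1), ?_⟩
        rw [Set.mem_Icc]
        have : ((5 ^ K : ℕ) : ℤ) ≤ (n : ℤ) := by exact_mod_cast h5
        rw [hc] at this
        omega
      · rcases Finset.mem_union.1 hw2 with h' | h' <;> simp only [Finset.mem_Icc] at h'
        · exact ⟨mem_range_pos h'.1 (le_trans h'.2 hn5), by rw [Set.mem_Icc]; omega⟩
        · refine ⟨?_, by rw [Set.mem_Icc]; omega⟩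
          have := mem_range_neg (k := K) (w := -w) (by omega) (by omega)
          simpa using this

open Filter

theorem tendsto_frac (a c d : ℝ) (hc : 0 < c) :
    Tendsto (fun x : ℝ => (x + a) / (c * x + d)) atTop (nhds (1 / c)) := by
  have hnum : Tendsto (fun x : ℝ => 1 + a * x⁻¹) atTop (nhds 1) := by
    simpa using tendsto_const_nhds.add (tendsto_inv_atTop_zero.const_mul a)
  have hden : Tendsto (fun x : ℝ => c + d * x⁻¹) atTop (nhds c) := by
    simpa using tendsto_const_nhds.add (tendsto_inv_atTop_zero.const_mul d)
  have h1 := hnum.div hden (ne_of_gt hc)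
  refine Tendsto.congr' ?_ h1
  filter_upwards [eventually_gt_atTop (0:ℝ)] with x hx
  rw [Pi.div_apply]
  field_simp
  try ring

noncomputable def uu (n : ℕ) : ℝ :=
  ((Set.range ff ∩ Set.Icc (-(n:ℤ)) (n:ℤ)).ncard : ℝ) / (2 * n + 1)

theorem cnt_upper (n : ℕ) : (Set.range ff ∩ Set.Icc (-(n:ℤ)) (n:ℤ)).ncard ≤ 2 * n + 1 := by
  have h1 : (Set.range ff ∩ Set.Icc (-(n:ℤ)) (n:ℤ)).ncard ≤ (Set.Icc (-(n:ℤ)) (n:ℤ)).ncard :=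
    Set.ncard_le_ncard Set.inter_subset_right (Set.finite_Icc _ _)
  have h2 : (Set.Icc (-(n:ℤ)) (n:ℤ)).ncard = 2 * n + 1 := by
    rw [← Finset.coe_Icc, Set.ncard_coe_finset, Int.card_Icc]
    omega
  omega

theorem uu_nonneg (n : ℕ) : 0 ≤ uu n := by
  unfold uu
  positivity

theorem uu_le_one (n : ℕ) : uu n ≤ 1 := by
  unfold uu
  rw [div_le_one (by positivity)]
  have h := cnt_upper n
  have : ((Set.range ff ∩ Set.Icc (-(n:ℤ)) (n:ℤ)).ncard : ℝ) ≤ ((2 * n + 1 : ℕ) : ℝ) :=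
    Nat.cast_le.2 h
  push_cast at this
  linarith

theorem uu_bddAbove : IsBoundedUnder (· ≤ ·) atTop uu :=
  ⟨1, eventually_map.2 (Eventually.of_forall uu_le_one)⟩
theorem uu_bddBelow : IsBoundedUnder (· ≥ ·) atTop uu :=
  ⟨0, eventually_map.2 (Eventually.of_forall uu_nonneg)⟩

theorem limsup_half : (1 / 2 : ℝ) ≤ limsup uu atTop := by
  by_contra hcon
  push_neg at hcon
  obtain ⟨b, hb1, hb2⟩ := exists_between hcon
  have hb : b ≤ limsup uu atTop := by
    refine le_limsup_of_frequently_le ?_ uu_bddAbove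
    have htend : Tendsto (fun K : ℕ => (((5:ℝ) ^ K) + (-1)) / (2 * (5:ℝ) ^ K + 1)) atTop
        (nhds (1/2)) :=
      (tendsto_frac (-1) 2 1 two_pos).comp
        (tendsto_pow_atTop_atTop_of_one_lt (by norm_num : (1:ℝ) < 5))
    have hev : ∀ᶠ K : ℕ in atTop, b < (((5:ℝ) ^ K) + (-1)) / (2 * (5:ℝ) ^ K + 1) :=
      htend.eventually (eventually_gt_nhds hb2)
    have hUK : ∀ K : ℕ, (((5:ℝ) ^ K) + (-1)) / (2 * (5:ℝ) ^ K + 1) ≤ uu (5 ^ K) := by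
      intro K
      unfold uu
      have hcA := cnt_A K
      have hpos : (1:ℕ) ≤ 5 ^ K := Nat.one_le_pow _ _ (by norm_num)
      have hcast : ((5 ^ K : ℕ) : ℝ) = (5:ℝ) ^ K := by push_cast; ring
      rw [hcast, div_le_div_iff_of_pos_right (by positivity)]
      have : ((5 ^ K - 1 : ℕ) : ℝ) ≤ ((Set.range ff ∩
          Set.Icc (-((5 ^ K : ℕ) : ℤ)) ((5 ^ K : ℕ) : ℤ)).ncard : ℝ) := Nat.cast_le.2 hcA
      rw [Nat.cast_sub hpos] at this
      push_cast at this ⊢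
      linarith
    have hphi : Tendsto (fun K : ℕ => 5 ^ K) atTop atTop := by
      apply tendsto_atTop_mono (fun K => ?_) tendsto_id
      calc K = id K := rfl
      _ ≤ 5 ^ K := Nat.le_of_lt (Nat.lt_pow_self (n := K) (by norm_num))
    exact hphi.frequently
      ((hev.mono fun K hK => le_trans (le_of_lt hK) (hUK K)).frequently)
  exact absurd hb (not_le.2 hb1)

theorem liminf_sixth : (1 / 6 : ℝ) ≤ liminf uu atTop := by
  set v : ℕ → ℝ := fun n => ((n : ℝ) + (-5)) / (6 * (n : ℝ) + 3) with hv
  have htend : Tendsto v atTop (nhds (1/6)) :=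
    (tendsto_frac (-5) 6 3 (by norm_num)).comp tendsto_natCast_atTop_atTop
  have hvle : ∀ n : ℕ, v n ≤ uu n := by
    intro n
    have hcB := cnt_B n
    have hcnt : ((n : ℝ)) - 5 ≤ 3 * ((Set.range ff ∩ Set.Icc (-(n:ℤ)) (n:ℤ)).ncard : ℝ) := by
      have : (n : ℝ) ≤ 3 * ((Set.range ff ∩ Set.Icc (-(n:ℤ)) (n:ℤ)).ncard : ℝ) + 5 := by
        exact_mod_cast Nat.cast_le.2 hcB
      linarith
    rw [hv]
    unfold uu
    rw [div_le_div_iff₀ (by positivity) (by positivity)]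
    nlinarith [Nat.cast_nonneg (α := ℝ) n,
      Nat.cast_nonneg (α := ℝ) (Set.range ff ∩ Set.Icc (-(n:ℤ)) (n:ℤ)).ncard]
  have h1 : liminf v atTop ≤ liminf uu atTop :=
    liminf_le_liminf (Eventually.of_forall hvle)
      ⟨0, eventually_atTop.2 ⟨5, fun n hn => by
        rw [hv]
        have h5 : (5:ℝ) ≤ (n:ℝ) := by exact_mod_cast hn
        have : (0:ℝ) ≤ ((n : ℝ) + (-5)) / (6 * (n : ℝ) + 3) :=
          div_nonneg (by linarith) (by linarith)
        simpa using this⟩⟩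
      (uu_bddAbove.isCoboundedUnder_ge)
  rw [htend.liminf_eq] at h1
  exact h1

/-- α_ℤ(3) ≥ 1/2 and β_ℤ(3) ≥ 1/6 : there exist a set `S` of integers and a bijection
`f : ℕ → S` avoiding 3-term arithmetic progressions, with upper density of `S` at least
`1/2` and lower density at least `1/6`. -/
theorem density_int_avoid_3AP :
    ∃ (S : Set ℤ) (f : ℕ → ℤ),
      Function.Injective f ∧ Set.range f = S ∧
      (¬ ∃ (i₁ i₂ i₃ : ℕ) (d : ℤ), i₁ < i₂ ∧ i₂ < i₃ ∧ d ≠ 0 ∧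
        f i₂ = f i₁ + d ∧ f i₃ = f i₂ + d) ∧
      (1 / 2 : ℝ) ≤
        limsup (fun n : ℕ =>
          ((S ∩ Set.Icc (-(n : ℤ)) (n : ℤ)).ncard : ℝ) / (2 * n + 1)) atTop ∧
      (1 / 6 : ℝ) ≤
        liminf (fun n : ℕ =>
          ((S ∩ Set.Icc (-(n : ℤ)) (n : ℤ)).ncard : ℝ) / (2 * n + 1)) atTop := by
  exact ⟨Set.range ff, ff, ff_inj, rfl, ff_ap_free, limsup_half, liminf_sixth⟩
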